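/- Let (X, μ) be a measure space, N ≥ 1 an integer, and p > 1 a real number. If (F_k) is a sequence in L^p(X, μ; ℝ^N) converging to F in the L^p norm, then the sequence of functions x ↦ |F_k(x)|^{p−2}F_k(x) converges to x ↦ |F(x)|^{p−2}F(x) in L^{p/(p−1)}(X, μ; ℝ^N); that is, ∫_X | |F_k|^{p−2}F_k − |F|^{p−2}F |^{p/(p−1)} dμ → 0 as k → ∞. -/

import Mathlib

open MeasureTheory Filter
open scoped ENNReal NNReal

section Aux

variable {E : Type*} [NormedAddCommGroup E] [NormedSpace ℝ E]

lemma phi_zero (p : ℝ) : (‖(0 : E)‖ ^ (p - 2)) • (0 : E) = 0 := smul_zero _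

lemma phi_norm {p : ℝ} (hp : 1 < p) (z : E) :
    ‖(‖z‖ ^ (p - 2)) • z‖ = ‖z‖ ^ (p - 1) := by
  rcases eq_or_ne z 0 with rfl | hz
  · simp [Real.zero_rpow (by linarith : p - 1 ≠ 0)]
  · have hz' : (0 : ℝ) < ‖z‖ := norm_pos_iff.mpr hz
    rw [norm_smul, Real.norm_eq_abs, abs_of_nonneg (Real.rpow_nonneg hz'.le _)]
    calc ‖z‖ ^ (p - 2) * ‖z‖ = ‖z‖ ^ (p - 2) * ‖z‖ ^ (1 : ℝ) := by rw [Real.rpow_one]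
      _ = ‖z‖ ^ (p - 1) := by rw [← Real.rpow_add hz']; ring_nf

lemma phi_cont {p : ℝ} (hp : 1 < p) :
    Continuous (fun z : E => (‖z‖ ^ (p - 2)) • z) := by
  rw [continuous_iff_continuousAt]
  intro z
  rcases eq_or_ne z 0 with rfl | hz
  · have h0 : Tendsto (fun z : E => (‖z‖ ^ (p - 2)) • z) (nhds 0) (nhds 0) := by
      apply squeeze_zero_norm (fun z => le_of_eq (phi_norm hp z))
      have hc : ContinuousAt (fun t : ℝ => t ^ (p - 1)) 0 :=
        Real.continuousAt_rpow_const 0 (p - 1) (Or.inr (by linarith))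
      have hn : Tendsto (fun z : E => ‖z‖) (nhds 0) (nhds 0) := tendsto_norm_zero
      have := hc.tendsto.comp hn
      simpa [Function.comp_def, Real.zero_rpow (by linarith : p - 1 ≠ 0)] using this
    simpa [ContinuousAt, phi_zero p] using h0
  · exact ((Real.continuousAt_rpow_const ‖z‖ (p - 2)
      (Or.inl (norm_ne_zero_iff.mpr hz))).comp continuous_norm.continuousAt).smul
      continuousAt_id

lemma phi_enorm {p : ℝ} (hp : 1 < p) (z : E) :
    ((‖(‖z‖ ^ (p - 2)) • z‖₊ : ℝ≥0∞)) ^ (p / (p - 1)) = (‖z‖₊ : ℝ≥0∞) ^ p := by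
  have hp1 : p - 1 ≠ 0 := by linarith
  have h1 : (‖(‖z‖ ^ (p - 2)) • z‖₊ : ℝ≥0) = ‖z‖₊ ^ (p - 1) := by
    ext
    simp only [coe_nnnorm, NNReal.coe_rpow]
    exact phi_norm hp z
  rw [h1, ENNReal.coe_rpow_of_nonneg _ (by linarith : (0:ℝ) ≤ p - 1),
    ← ENNReal.rpow_mul]
  congr 1
  field_simp

lemma eLpNorm_phi {X : Type*} [MeasurableSpace X] {μ : Measure X}
    {p : ℝ} (hp : 1 < p) (f : X → E) :
    eLpNorm (fun x => (‖f x‖ ^ (p - 2)) • f x) (ENNReal.ofReal (p / (p - 1))) μ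
      = (eLpNorm f (ENNReal.ofReal p) μ) ^ (p - 1) := by
  have hp0 : (0 : ℝ) < p := by linarith
  have hp1 : (0 : ℝ) < p - 1 := by linarith
  have hq0 : (0 : ℝ) < p / (p - 1) := div_pos hp0 hp1
  rw [eLpNorm_eq_lintegral_rpow_enorm_toReal (by simpa using hq0) ENNReal.ofReal_ne_top,
    eLpNorm_eq_lintegral_rpow_enorm_toReal (by simpa using hp0) ENNReal.ofReal_ne_top,
    ENNReal.toReal_ofReal hq0.le, ENNReal.toReal_ofReal hp0.le]
  simp only [enorm_eq_nnnorm]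
  have hI : ∫⁻ x, (‖(‖f x‖ ^ (p - 2)) • f x‖₊ : ℝ≥0∞) ^ (p / (p - 1)) ∂μ
      = ∫⁻ x, (‖f x‖₊ : ℝ≥0∞) ^ p ∂μ := by
    apply lintegral_congr
    intro x
    exact phi_enorm hp (f x)
  rw [hI, ← ENNReal.rpow_mul]
  congr 1
  field_simp

end Aux

/-- If `F_k → F` in `L^p(X, μ; ℝ^N)`, then `|F_k|^{p-2} F_k → |F|^{p-2} F` in
`L^{p/(p-1)}(X, μ; ℝ^N)`. -/
theorem stmt_3 {X : Type*} [MeasurableSpace X] (μ : Measure X)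
    (N : ℕ) (hN : 1 ≤ N) (p : ℝ) (hp : 1 < p) [Fact (1 ≤ ENNReal.ofReal p)]
    (Fk : ℕ → Lp (EuclideanSpace ℝ (Fin N)) (ENNReal.ofReal p) μ)
    (F : Lp (EuclideanSpace ℝ (Fin N)) (ENNReal.ofReal p) μ)
    (hconv : Tendsto Fk atTop (nhds F)) :
    Tendsto
      (fun k => ∫ x,
        ‖(‖Fk k x‖ ^ (p - 2)) • Fk k x - (‖F x‖ ^ (p - 2)) • F x‖ ^ (p / (p - 1)) ∂μ)
      atTop (nhds 0) := by
  set E := EuclideanSpace ℝ (Fin N)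
  set q : ℝ := p / (p - 1) with hqdef
  have hp0 : (0 : ℝ) < p := by linarith
  have hp1 : (0 : ℝ) < p - 1 := by linarith
  have hpne : p - 1 ≠ 0 := ne_of_gt hp1
  have hq0 : (0 : ℝ) < q := div_pos hp0 hp1
  have hq1 : (1 : ℝ) ≤ q := by
    rw [hqdef, le_div_iff₀ hp1]; linarith
  have hP0 : (ENNReal.ofReal p) ≠ 0 := by simp [hp0]
  have hPtop : (ENNReal.ofReal p) ≠ ∞ := ENNReal.ofReal_ne_top
  have hP1 : 1 ≤ ENNReal.ofReal p := Fact.out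
  have hQ1 : 1 ≤ ENNReal.ofReal q := by
    rw [← ENNReal.ofReal_one]
    exact ENNReal.ofReal_le_ofReal hq1
  have hQtop : (ENNReal.ofReal q) ≠ ∞ := ENNReal.ofReal_ne_top
  -- notation for the nonlinear maps
  set g : ℕ → X → E := fun k x => (‖Fk k x‖ ^ (p - 2)) • Fk k x with hgdef
  set gF : X → E := fun x => (‖F x‖ ^ (p - 2)) • F x with hgFdef
  -- L^p convergence as eLpNorm
  have hLp : Tendsto (fun k => eLpNorm (⇑(Fk k) - ⇑F) (ENNReal.ofReal p) μ) atTop (nhds 0) :=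
    (Lp.tendsto_Lp_iff_tendsto_eLpNorm' Fk F).mp hconv
  have hmeasF : ∀ k : ℕ, MemLp (⇑(Fk k)) (ENNReal.ofReal p) μ := fun k => Lp.memLp (Fk k)
  have hFmem : MemLp (⇑F) (ENNReal.ofReal p) μ := Lp.memLp F
  -- in-measure convergence, uniform integrability and tightness of (Fk)
  obtain ⟨hIM, hui, hut⟩ :=
    (MeasureTheory.tendstoInMeasure_iff_tendsto_Lp hP1 hPtop hmeasF hFmem).mpr hLp
  -- indicator commutation
  have hind : ∀ (f : X → E) (s : Set X),
      s.indicator (fun x => (‖f x‖ ^ (p - 2)) • f x)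
        = fun x => (‖s.indicator f x‖ ^ (p - 2)) • s.indicator f x := by
    intro f s
    funext x
    by_cases hx : x ∈ s
    · simp [Set.indicator_of_mem hx]
    · simp [Set.indicator_of_notMem hx, phi_zero]
  -- uniform integrability of g
  have huig : UnifIntegrable g (ENNReal.ofReal q) μ := by
    intro ε hε
    obtain ⟨δ, hδ, hδ'⟩ := hui (Real.rpow_pos_of_pos hε (1 / (p - 1)))
    refine ⟨δ, hδ, fun k s hs hμs => ?_⟩
    rw [hgdef, hind, eLpNorm_phi hp]
    calc eLpNorm (s.indicator ⇑(Fk k)) (ENNReal.ofReal p) μ ^ (p - 1)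
        ≤ (ENNReal.ofReal (ε ^ (1 / (p - 1)))) ^ (p - 1) :=
          ENNReal.rpow_le_rpow (hδ' k s hs hμs) hp1.le
      _ = ENNReal.ofReal ε := by
          rw [ENNReal.ofReal_rpow_of_nonneg (Real.rpow_nonneg hε.le _) hp1.le,
            ← Real.rpow_mul hε.le, one_div, inv_mul_cancel₀ hpne, Real.rpow_one]
  -- uniform tightness of g
  have hutg : UnifTight g (ENNReal.ofReal q) μ := by
    intro ε hε
    obtain ⟨s, hμs, hs'⟩ := hut (NNReal.rpow_pos (p := 1 / (p - 1)) hε)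
    refine ⟨s, hμs, fun k => ?_⟩
    rw [hgdef, hind, eLpNorm_phi hp]
    calc eLpNorm (sᶜ.indicator ⇑(Fk k)) (ENNReal.ofReal p) μ ^ (p - 1)
        ≤ ((ε ^ (1 / (p - 1)) : ℝ≥0) : ℝ≥0∞) ^ (p - 1) :=
          ENNReal.rpow_le_rpow (hs' k) hp1.le
      _ = (ε : ℝ≥0∞) := by
          rw [← ENNReal.coe_rpow_of_nonneg _ hp1.le, ← NNReal.rpow_mul,
            one_div, inv_mul_cancel₀ hpne, NNReal.rpow_one]
  -- g k and gF are in L^Q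
  have hgmeas : ∀ k, AEStronglyMeasurable (g k) μ := fun k =>
    (phi_cont hp).comp_aestronglyMeasurable (hmeasF k).aestronglyMeasurable
  have hgFmem : MemLp gF (ENNReal.ofReal q) μ := by
    refine ⟨(phi_cont hp).comp_aestronglyMeasurable hFmem.aestronglyMeasurable, ?_⟩
    rw [hgFdef]
    rw [hqdef, eLpNorm_phi hp]
    exact ENNReal.rpow_lt_top_of_nonneg hp1.le hFmem.eLpNorm_ne_top
  -- convergence of eLpNorms
  have hmain : Tendsto (fun k => eLpNorm (g k - gF) (ENNReal.ofReal q) μ) atTop (nhds 0) := by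
    refine tendsto_of_subseq_tendsto fun ns hns => ?_
    obtain ⟨ms, _, hms⟩ := TendstoInMeasure.exists_seq_tendsto_ae
      (fun ε hε => (hIM ε hε).comp hns)
    refine ⟨ms, ?_⟩
    have haeg : ∀ᵐ x ∂μ, Tendsto (fun i => g (ns (ms i)) x) atTop (nhds (gF x)) := by
      filter_upwards [hms] with x hx
      exact (((phi_cont hp).tendsto (F x)).comp hx :)
    exact tendsto_Lp_of_tendsto_ae hQ1 hQtop (fun i => hgmeas (ns (ms i))) hgFmem
      (fun ε hε => let ⟨δ, hδ, hδ'⟩ := huig hε; ⟨δ, hδ, fun i => hδ' _⟩)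
      (fun ε hε => let ⟨s, hμs, hsε⟩ := hutg hε; ⟨s, hμs, fun i => hsε _⟩)
      haeg
  -- rewrite the goal integrals in terms of eLpNorm
  have hkey : ∀ k, (∫ x, ‖(‖Fk k x‖ ^ (p - 2)) • Fk k x - (‖F x‖ ^ (p - 2)) • F x‖ ^ q ∂μ)
      = ((eLpNorm (g k - gF) (ENNReal.ofReal q) μ).toReal) ^ q := by
    intro k
    have hmeas : AEStronglyMeasurable (g k - gF) μ := (hgmeas k).sub hgFmem.aestronglyMeasurable
    have hstep : (∫ x, ‖(‖Fk k x‖ ^ (p - 2)) • Fk k x - (‖F x‖ ^ (p - 2)) • F x‖ ^ q ∂μ)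
        = ∫ x, ‖(g k - gF) x‖ ^ q ∂μ := rfl
    rw [hstep, MeasureTheory.integral_eq_lintegral_of_nonneg_ae
      (Filter.Eventually.of_forall fun x => Real.rpow_nonneg (norm_nonneg _) _)
      ((Real.continuous_rpow_const hq0.le).comp_aestronglyMeasurable hmeas.norm)]
    have h1 : ∫⁻ x, ENNReal.ofReal (‖(g k - gF) x‖ ^ q) ∂μ
        = ∫⁻ x, (‖(g k - gF) x‖₊ : ℝ≥0∞) ^ q ∂μ := by
      apply lintegral_congr
      intro x
      rw [← ENNReal.ofReal_rpow_of_nonneg (norm_nonneg _) hq0.le, ofReal_norm, enorm_eq_nnnorm]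
    have h2 : ∫⁻ x, (‖(g k - gF) x‖₊ : ℝ≥0∞) ^ q ∂μ
        = (eLpNorm (g k - gF) (ENNReal.ofReal q) μ) ^ q := by
      rw [eLpNorm_eq_lintegral_rpow_enorm_toReal (by simpa using hq0) hQtop]
      simp only [enorm_eq_nnnorm]
      rw [ENNReal.toReal_ofReal hq0.le, ← ENNReal.rpow_mul, one_div,
        inv_mul_cancel₀ (ne_of_gt hq0), ENNReal.rpow_one]
    rw [h1, h2, ← ENNReal.toReal_rpow]
  simp only [hkey]
  have htoReal : Tendsto (fun k => (eLpNorm (g k - gF) (ENNReal.ofReal q) μ).toReal)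
      atTop (nhds 0) := by
    have := (ENNReal.tendsto_toReal (ENNReal.zero_ne_top)).comp hmain
    simpa [Function.comp_def] using this
  have hcont : ContinuousAt (fun t : ℝ => t ^ q) 0 :=
    Real.continuousAt_rpow_const 0 q (Or.inr hq0.le)
  have := hcont.tendsto.comp htoReal
  simpa [Function.comp_def, Real.zero_rpow (ne_of_gt hq0)] using this
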